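/- Every two-player miner's dilemma game with betrayal assumption admits at least one pure Nash equilibrium, i.e., there exists (x1*,x2*) ∈ [0,m1]×[0,m2] with r1(x1*,x2*) ≥ r1(x1,x2*) for all x1 ∈ [0,m1] and r2(x1*,x2*) ≥ r2(x1*,x2) for all x2 ∈ [0,m2]. -/

import Mathlib

/-- Average reward of pool 1 in the two-player miner's dilemma with betrayal,
where the total mining power is `m1 + m2 + t`. -/
noncomputable def r1 (m1 m2 t p x1 x2 : ℝ) : ℝ :=
  (m1*m2 + m1*x1 + p*m2*x2 - (1-p)*x1^2 - (1-p)*x1*x2) /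
    (((m1+m2+t) - (1-p)*(x1+x2)) * (m1*m2 + m1*x1 + m2*x2))

/-- Average reward of pool 2. -/
noncomputable def r2 (m1 m2 t p x1 x2 : ℝ) : ℝ :=
  (m1*m2 + m2*x2 + p*m1*x1 - (1-p)*x2^2 - (1-p)*x1*x2) /
    (((m1+m2+t) - (1-p)*(x1+x2)) * (m1*m2 + m1*x1 + m2*x2))

/-- `(x1, x2)` is a pure Nash equilibrium of the two-player miner's dilemma game. -/
noncomputable def IsNash (m1 m2 t p x1 x2 : ℝ) : Prop :=
  x1 ∈ Set.Icc 0 m1 ∧ x2 ∈ Set.Icc 0 m2 ∧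
  (∀ x ∈ Set.Icc (0:ℝ) m1, r1 m1 m2 t p x x2 ≤ r1 m1 m2 t p x1 x2) ∧
  (∀ x ∈ Set.Icc (0:ℝ) m2, r2 m1 m2 t p x1 x ≤ r2 m1 m2 t p x1 x2)

namespace MD

/-! ### Quadratic root machinery -/

noncomputable def rho (a b c : ℝ) : ℝ := 2*c / (-b + Real.sqrt (b^2 - 4*a*c))

variable {a b c : ℝ}

lemma rden (hb : b < 0) : 0 < -b + Real.sqrt (b^2 - 4*a*c) := by
  have := Real.sqrt_nonneg (b^2 - 4*a*c); linarith

lemma rneg_c (hb : b < 0) (h : rho a b c ≤ 0) : c ≤ 0 := by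
  have hd := rden (a := a) (c := c) hb
  unfold rho at h
  rcases div_nonpos_iff.mp h with ⟨h1, h2⟩ | ⟨h1, h2⟩
  · linarith
  · linarith

lemma rpos_c (hb : b < 0) (h : 0 < rho a b c) : 0 < c := by
  by_contra hc
  push_neg at hc
  have hd := rden (a := a) (c := c) hb
  have : rho a b c ≤ 0 := div_nonpos_of_nonpos_of_nonneg (by linarith) (le_of_lt hd)
  linarith

/-- If `0 ≤ x ≤ rho`, then the quadratic is nonnegative at `x`. -/
lemma rR4 (hb : b < 0) {x : ℝ} (hx0 : 0 ≤ x) (hx : x ≤ rho a b c) :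
    0 ≤ a*x^2 + b*x + c := by
  set s := Real.sqrt (b^2 - 4*a*c) with hs_def
  have hs : 0 ≤ s := Real.sqrt_nonneg _
  have hden : 0 < -b + s := by linarith
  have hxd : x * (-b + s) ≤ 2*c := by
    calc x * (-b+s) ≤ rho a b c * (-b+s) := mul_le_mul_of_nonneg_right hx (le_of_lt hden)
      _ = 2*c := by unfold rho; rw [← hs_def]; exact div_mul_cancel₀ _ (ne_of_gt hden)
  rcases le_or_gt 0 (b^2 - 4*a*c) with hd | hd
  · have heq : s^2 = b^2 - 4*a*c := Real.sq_sqrt hd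
    rcases lt_trichotomy a 0 with ha | ha | ha
    · nlinarith [mul_le_mul_of_nonneg_right hxd (by linarith : (0:ℝ) ≤ -2*a),
        mul_nonneg hx0 hs, sq_nonneg (2*a*x+b+s), mul_pos (neg_pos.mpr ha) (neg_pos.mpr ha)]
    · subst ha
      have hsb : s = -b := by
        have h2 : s^2 = b^2 := by simpa using heq
        nlinarith
      rw [hsb] at hxd; nlinarith
    · have hprod : (-b + s) * (-b - s) = 4*a*c := by nlinarith
      have hrho : rho a b c = (-b - s)/(2*a) := by
        unfold rho
        rw [div_eq_div_iff (ne_of_gt hden) (by linarith : (2:ℝ)*a ≠ 0)]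
        linear_combination -hprod
      rw [hrho] at hx
      have h2 : 2*a*x ≤ -b - s := by
        have h3 := mul_le_mul_of_nonneg_right hx (by linarith : (0:ℝ) ≤ 2*a)
        calc 2*a*x = x * (2*a) := by ring
          _ ≤ (-b-s)/(2*a) * (2*a) := h3
          _ = -b - s := by field_simp
      nlinarith [sq_nonneg (2*a*x + b)]
  · have hz : s = 0 := by
      rw [hs_def]; exact Real.sqrt_eq_zero'.mpr (by linarith)
    rw [hz] at hxd
    have hc0 : 0 ≤ c := by nlinarith [mul_nonneg hx0 (show (0:ℝ) ≤ -b by linarith)]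
    have hc : 0 < c := by
      rcases hc0.lt_or_eq with h | h
      · exact h
      · exfalso; rw [← h] at hd; nlinarith [sq_nonneg b]
    have ha : 0 < a := by
      by_contra h
      push_neg at h
      nlinarith [sq_nonneg b, mul_nonpos_of_nonpos_of_nonneg (by linarith : 4*a ≤ 0) hc0]
    nlinarith [sq_nonneg (2*a*x + b)]

/-- The discriminant is positive when the quadratic takes a negative value (and c>0). -/
lemma rdisc_pos (hb : b < 0) (hc : 0 < c) {M : ℝ} (hM : a*M^2 + b*M + c < 0) :
    0 < b^2 - 4*a*c := by
  rcases le_or_gt a 0 with ha | ha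
  · nlinarith
  · nlinarith [sq_nonneg (2*a*M + b)]

lemma rroot (hb : b < 0) (hd : 0 ≤ b^2 - 4*a*c) :
    a * (rho a b c)^2 + b * (rho a b c) + c = 0 := by
  have hs : 0 ≤ Real.sqrt (b^2 - 4*a*c) := Real.sqrt_nonneg _
  have heq : Real.sqrt (b^2 - 4*a*c)^2 = b^2 - 4*a*c := Real.sq_sqrt hd
  have hden : 0 < -b + Real.sqrt (b^2 - 4*a*c) := by linarith
  have hden' : -b + Real.sqrt (b^2 - 4*a*c) ≠ 0 := ne_of_gt hden
  unfold rho
  have hr : 2*c/(-b + Real.sqrt (b^2 - 4*a*c)) * (-b + Real.sqrt (b^2 - 4*a*c)) = 2*c :=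
    div_mul_cancel₀ _ hden'
  have h2 : (a*(2*c/(-b + Real.sqrt (b^2 - 4*a*c)))^2 + b*(2*c/(-b + Real.sqrt (b^2 - 4*a*c))) + c)
      * (-b + Real.sqrt (b^2 - 4*a*c))^2 = 0 := by
    linear_combination (a*(2*c/(-b + Real.sqrt (b^2 - 4*a*c)) * (-b + Real.sqrt (b^2 - 4*a*c)) + 2*c)
      + b*(-b + Real.sqrt (b^2 - 4*a*c))) * hr + c*heq
  exact (mul_eq_zero.mp h2).resolve_right (pow_ne_zero 2 hden')

/-- Either rho is a root, or the quadratic is everywhere positive. -/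
lemma rR3 (hb : b < 0) (h : 0 < rho a b c) :
    (a * (rho a b c)^2 + b * (rho a b c) + c = 0) ∨ (∀ x : ℝ, 0 < a*x^2 + b*x + c) := by
  rcases le_or_gt 0 (b^2 - 4*a*c) with hd | hd
  · exact Or.inl (rroot hb hd)
  · right
    have hc : 0 < c := rpos_c hb h
    have ha : 0 < a := by
      by_contra h'
      push_neg at h'
      nlinarith [sq_nonneg b, mul_nonpos_of_nonpos_of_nonneg (by linarith : 4*a ≤ 0) (le_of_lt hc)]
    intro x
    nlinarith [sq_nonneg (2*a*x + b)]

/-- M0 < rho when the quadratic is positive at M0 and negative at M1 ≥ M0 ≥ 0. -/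
lemma rR7 (hb : b < 0) (hc : 0 < c) {M0 M1 : ℝ} (h0 : 0 ≤ M0) (h01 : M0 ≤ M1)
    (hGM0 : 0 < a*M0^2 + b*M0 + c) (hGM1 : a*M1^2 + b*M1 + c < 0) :
    M0 < rho a b c := by
  have hd : 0 < b^2 - 4*a*c := rdisc_pos hb hc hGM1
  set s := Real.sqrt (b^2 - 4*a*c) with hs_def
  have hs : 0 ≤ s := Real.sqrt_nonneg _
  have heq : s^2 = b^2 - 4*a*c := Real.sq_sqrt (le_of_lt hd)
  have hden : 0 < -b + s := by linarith
  rw [show rho a b c = 2*c/(-b+s) from rfl, lt_div_iff₀ hden]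
  rcases lt_trichotomy a 0 with ha | ha | ha
  · have h4 : (2*a*M0+b)^2 < s^2 := by nlinarith
    have h5 : 0 < 2*a*M0 + b + s := by nlinarith
    have h6 := mul_pos h5 hden
    nlinarith [h6, heq]
  · subst ha
    have hz : (s+b)*(s-b) = 0 := by linear_combination heq
    have hsb : s = -b := by
      rcases mul_eq_zero.mp hz with h | h
      · linarith
      · linarith
    rw [hsb]; nlinarith
  · have hX2 : s^2 < (2*a*M0+b)^2 := by nlinarith
    have hXlt : 2*a*M1+b < s := by nlinarith [sq_nonneg (2*a*M1+b)]
    have hXle : 2*a*M0+b ≤ 2*a*M1+b := by nlinarith [mul_le_mul_of_nonneg_left h01 (le_of_lt ha)]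
    have hXs : 2*a*M0 + b - s < 0 := by linarith
    have h3 : 2*a*M0 + b < -s := by
      by_contra h'
      push_neg at h'
      nlinarith [mul_nonpos_of_nonpos_of_nonneg (le_of_lt hXs) (by linarith : (0:ℝ) ≤ 2*a*M0+b+s)]
    have h7 := mul_lt_mul_of_pos_right (show 2*a*M0 < -b-s by linarith) hden
    nlinarith [h7, heq]

/-! ### Game-specific definitions -/

/-- coefficients of the derivative-sign quadratic for pool 1 (in x1), given x2 -/
noncomputable def cA (m1 m2 t p x2 : ℝ) : ℝ := (1-p)*m2*x2 - m1*(t+m2*p)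
noncomputable def cB (m1 m2 t p x2 : ℝ) : ℝ := 2*m2*((1-p)*x2^2 - (t+m2)*(x2+m1))
noncomputable def cC (m1 m2 t p x2 : ℝ) : ℝ :=
  m2*((1-p)*x2^3 - t*x2^2 - (1-p)*m2*x2^2 - m1*x2^2 + (1+p)*m1*m2*x2 + m1^2*m2)

lemma r2_swap (m1 m2 t p x1 x2 : ℝ) : r2 m1 m2 t p x1 x2 = r1 m2 m1 t p x2 x1 := by
  unfold r1 r2; ring_nf

section ineqs
variable {m1 m2 t p x1 x2 : ℝ}

lemma cB_neg (hm1 : 0 < m1) (hm2 : 0 < m2) (ht : 0 ≤ t) (hp0 : 0 ≤ p) (hp1 : p < 1)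
    (hx20 : 0 ≤ x2) (hx21 : x2 ≤ m2) : cB m1 m2 t p x2 < 0 := by
  unfold cB
  nlinarith [mul_nonneg hx20 (sub_nonneg.mpr hx21), mul_nonneg hp0 (sq_nonneg x2),
    mul_nonneg ht hx20, mul_nonneg ht hm1.le, mul_pos hm2 hm1]

lemma Gm1_nonpos (hm1 : 0 < m1) (hm2 : 0 < m2) (ht : 0 ≤ t) (hp0 : 0 ≤ p) (hp1 : p < 1)
    (hx20 : 0 ≤ x2) (hx21 : x2 ≤ m2) :
    cA m1 m2 t p x2 * m1^2 + cB m1 m2 t p x2 * m1 + cC m1 m2 t p x2 ≤ 0 := by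
  unfold cA cB cC
  nlinarith [mul_nonneg (mul_nonneg (mul_nonneg (by linarith : (0:ℝ) ≤ 1-p) hm2.le) (sq_nonneg x2)) (sub_nonneg.mpr hx21),
    mul_nonneg (mul_nonneg hm2.le ht) (sq_nonneg x2),
    mul_nonneg (mul_nonneg (mul_nonneg hm1.le hm2.le) ht) hx20,
    mul_nonneg (mul_nonneg (mul_nonneg hm1.le hm1.le) hm2.le) ht,
    mul_nonneg (mul_nonneg (mul_nonneg hm1.le hm1.le) hm1.le) ht,
    mul_nonneg (mul_nonneg (mul_nonneg (mul_nonneg hm1.le hm1.le) hm1.le) hm2.le) hp0,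
    mul_nonneg (mul_nonneg (mul_nonneg hp0 hm1.le) hm2.le) (sq_nonneg x2),
    mul_nonneg (mul_nonneg (mul_nonneg (mul_nonneg (by linarith : (0:ℝ) ≤ 1-p) hm1.le) hm2.le) hx20) (sub_nonneg.mpr hx21),
    mul_nonneg (mul_nonneg (mul_nonneg hm1.le hm1.le) hm2.le)
      (by nlinarith : (0:ℝ) ≤ m2 - (1-p)*x2)]

lemma Gm1_neg (hm1 : 0 < m1) (hm2 : 0 < m2) (ht : 0 ≤ t) (hp0 : 0 ≤ p) (hp1 : p < 1)
    (hx20 : 0 ≤ x2) (hx21 : x2 ≤ m2) (htp : 0 < t ∨ 0 < p) :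
    cA m1 m2 t p x2 * m1^2 + cB m1 m2 t p x2 * m1 + cC m1 m2 t p x2 < 0 := by
  unfold cA cB cC
  rcases htp with h | h <;>
  nlinarith [mul_nonneg (mul_nonneg (mul_nonneg (by linarith : (0:ℝ) ≤ 1-p) hm2.le) (sq_nonneg x2)) (sub_nonneg.mpr hx21),
    mul_nonneg (mul_nonneg hm2.le ht) (sq_nonneg x2),
    mul_nonneg (mul_nonneg (mul_nonneg hm1.le hm2.le) ht) hx20,
    mul_nonneg (mul_nonneg (mul_nonneg hm1.le hm1.le) hm2.le) ht,
    mul_nonneg (mul_nonneg (mul_nonneg hm1.le hm1.le) hm1.le) ht,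
    mul_pos (mul_pos (mul_pos hm1 hm1) hm1) (mul_pos hm2 hm2),
    mul_nonneg (mul_nonneg (mul_nonneg (mul_nonneg hm1.le hm1.le) hm1.le) hm2.le) hp0,
    mul_nonneg (mul_nonneg (mul_nonneg hp0 hm1.le) hm2.le) (sq_nonneg x2),
    mul_nonneg (mul_nonneg (mul_nonneg (mul_nonneg (by linarith : (0:ℝ) ≤ 1-p) hm1.le) hm2.le) hx20) (sub_nonneg.mpr hx21),
    mul_nonneg (mul_nonneg (mul_nonneg hm1.le hm1.le) hm2.le)
      (by nlinarith : (0:ℝ) ≤ m2 - (1-p)*x2),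
    mul_pos (mul_pos (mul_pos hm1 hm1) hm1) hm2]

set_option maxHeartbeats 1000000 in
/-- Pool 1 deviation inequality, given the KKT sign condition. -/
lemma dev1 (hm1 : 0 < m1) (hm2 : 0 < m2) (ht : 0 ≤ t) (hp0 : 0 ≤ p) (hp1 : p < 1)
    (hx10 : 0 ≤ x1) (hx11 : x1 ≤ m1) (hx20 : 0 ≤ x2) (hx21 : x2 ≤ m2)
    (hA : (1-p)*(m1+x2) < m1+m2+t)
    (hS : ∀ x, 0 ≤ x → x ≤ m1 →
      ((1-p) * (cA m1 m2 t p x2 * x1^2 + cB m1 m2 t p x2 * x1 + cC m1 m2 t p x2)) * (x - x1) ≤ 0) :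
    ∀ x ∈ Set.Icc (0:ℝ) m1, r1 m1 m2 t p x x2 ≤ r1 m1 m2 t p x1 x2 := by
  intro x hx
  obtain ⟨hx0, hxm⟩ := hx
  have hq : 0 < 1 - p := by linarith
  have hAx : 0 < (m1+m2+t) - (1-p)*(x+x2) := by nlinarith
  have hA1 : 0 < (m1+m2+t) - (1-p)*(x1+x2) := by nlinarith
  have hBx : 0 < m1*m2 + m1*x + m2*x2 := by nlinarith
  have hB1 : 0 < m1*m2 + m1*x1 + m2*x2 := by nlinarith
  unfold r1
  rw [div_le_div_iff₀ (mul_pos hAx hBx) (mul_pos hA1 hB1)]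
  have hF3 : 0 ≤ ((m1+m2+t) - (1-p)*(x1+x2)) * (m1*m2 + m1*x1 + m2*x2)
      - m1*(m1*m2 + m1*x1 + p*m2*x2 - (1-p)*x1^2 - (1-p)*x1*x2) := by
    nlinarith [mul_nonneg (mul_nonneg hm2.le ht) hx20,
      mul_nonneg (mul_nonneg hm2.le hx20) (sub_nonneg.mpr hx21),
      mul_nonneg (mul_nonneg hp0 hm2.le) (sq_nonneg x2),
      mul_nonneg (mul_nonneg hm1.le ht) hx10,
      mul_nonneg (mul_nonneg (mul_nonneg hm1.le hm2.le) hp0) hx10,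
      mul_nonneg (mul_nonneg hm1.le hm2.le) ht,
      mul_nonneg (mul_nonneg (mul_nonneg hq.le hm1.le) hm2.le) (sub_nonneg.mpr hx21),
      mul_nonneg (mul_nonneg (mul_nonneg hq.le hm2.le) hx20) (sub_nonneg.mpr hx11),
      mul_nonneg (mul_nonneg hp0 hm1.le) (mul_nonneg hm2.le hm2.le)]
  have key : (m1*m2 + m1*x1 + p*m2*x2 - (1-p)*x1^2 - (1-p)*x1*x2) *
        (((m1+m2+t) - (1-p)*(x+x2)) * (m1*m2 + m1*x + m2*x2))
      - (m1*m2 + m1*x + p*m2*x2 - (1-p)*x^2 - (1-p)*x*x2) *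
        (((m1+m2+t) - (1-p)*(x1+x2)) * (m1*m2 + m1*x1 + m2*x2))
      = (1-p) * (((m1+m2+t) - (1-p)*(x1+x2)) * (m1*m2 + m1*x1 + m2*x2)
          - m1*(m1*m2 + m1*x1 + p*m2*x2 - (1-p)*x1^2 - (1-p)*x1*x2)) * (x - x1)^2
        + ((1-p) * (cA m1 m2 t p x2 * x1^2 + cB m1 m2 t p x2 * x1 + cC m1 m2 t p x2)) * (x1 - x) := by
    unfold cA cB cC; ring
  have h1 : 0 ≤ (1-p) * (((m1+m2+t) - (1-p)*(x1+x2)) * (m1*m2 + m1*x1 + m2*x2)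
      - m1*(m1*m2 + m1*x1 + p*m2*x2 - (1-p)*x1^2 - (1-p)*x1*x2)) * (x - x1)^2 :=
    mul_nonneg (mul_nonneg hq.le hF3) (sq_nonneg _)
  have h2 := hS x hx0 hxm
  linarith [key, h1, h2, (by nlinarith [h2] : (0:ℝ) ≤ ((1-p) * (cA m1 m2 t p x2 * x1^2 + cB m1 m2 t p x2 * x1 + cC m1 m2 t p x2)) * (x1 - x))]

end ineqs

/-! ### Best response and its properties -/

noncomputable def BR (m1 m2 t p x2 : ℝ) : ℝ :=
  min (max (rho (cA m1 m2 t p x2) (cB m1 m2 t p x2) (cC m1 m2 t p x2)) 0) m1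

section br
variable {m1 m2 t p x2 : ℝ}

lemma BR_nonneg (hm1 : 0 ≤ m1) : 0 ≤ BR m1 m2 t p x2 :=
  le_min (le_max_right _ _) hm1

lemma BR_le : BR m1 m2 t p x2 ≤ m1 := min_le_right _ _

lemma BR_KKT (hm1 : 0 < m1) (hm2 : 0 < m2) (ht : 0 ≤ t) (hp0 : 0 ≤ p) (hp1 : p < 1)
    (hx20 : 0 ≤ x2) (hx21 : x2 ≤ m2) :
    ∀ x, 0 ≤ x → x ≤ m1 →
      ((1-p) * (cA m1 m2 t p x2 * (BR m1 m2 t p x2)^2 + cB m1 m2 t p x2 * (BR m1 m2 t p x2)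
        + cC m1 m2 t p x2)) * (x - BR m1 m2 t p x2) ≤ 0 := by
  intro x hxl hxr
  have hq : 0 ≤ 1 - p := by linarith
  have hb : cB m1 m2 t p x2 < 0 := cB_neg hm1 hm2 ht hp0 hp1 hx20 hx21
  set ρ := rho (cA m1 m2 t p x2) (cB m1 m2 t p x2) (cC m1 m2 t p x2) with hρ
  rcases le_or_gt ρ 0 with h0 | h0
  · have hBR : BR m1 m2 t p x2 = 0 := by
      unfold BR; rw [← hρ, max_eq_right h0, min_eq_left hm1.le]
    rw [hBR]
    have hc : cC m1 m2 t p x2 ≤ 0 := rneg_c hb h0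
    have hSle : (1-p) * (cA m1 m2 t p x2 * 0^2 + cB m1 m2 t p x2 * 0 + cC m1 m2 t p x2) ≤ 0 := by
      nlinarith
    have := mul_nonpos_of_nonpos_of_nonneg hSle (by linarith : 0 ≤ x - 0)
    simpa using this
  · rcases lt_or_ge ρ m1 with hm | hm
    · have hBR : BR m1 m2 t p x2 = ρ := by
        unfold BR; rw [← hρ, max_eq_left h0.le, min_eq_left hm.le]
      rw [hBR]
      rcases rR3 hb h0 with hroot | hpos
      · rw [hroot]; simp
      · exfalso
        exact absurd (Gm1_nonpos hm1 hm2 ht hp0 hp1 hx20 hx21) (not_le.mpr (hpos m1))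
    · have hBR : BR m1 m2 t p x2 = m1 := by
        unfold BR; rw [← hρ, max_eq_left h0.le, min_eq_right hm]
      rw [hBR]
      have hG1 : 0 ≤ cA m1 m2 t p x2 * m1^2 + cB m1 m2 t p x2 * m1 + cC m1 m2 t p x2 :=
        rR4 hb hm1.le hm
      have hG2 := Gm1_nonpos hm1 hm2 ht hp0 hp1 hx20 hx21
      have : cA m1 m2 t p x2 * m1^2 + cB m1 m2 t p x2 * m1 + cC m1 m2 t p x2 = 0 :=
        le_antisymm hG2 hG1
      rw [this]; simp

lemma BR_lt (hm1 : 0 < m1) (hm2 : 0 < m2) (ht : 0 ≤ t) (hp0 : 0 ≤ p) (hp1 : p < 1)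
    (hx20 : 0 ≤ x2) (hx21 : x2 ≤ m2) (htp : 0 < t ∨ 0 < p) :
    BR m1 m2 t p x2 < m1 := by
  have hb : cB m1 m2 t p x2 < 0 := cB_neg hm1 hm2 ht hp0 hp1 hx20 hx21
  set ρ := rho (cA m1 m2 t p x2) (cB m1 m2 t p x2) (cC m1 m2 t p x2) with hρ
  rcases lt_or_ge ρ m1 with h | h
  · calc BR m1 m2 t p x2 ≤ max ρ 0 := min_le_left _ _
      _ < m1 := max_lt h hm1
  · exfalso
    have hG1 : 0 ≤ cA m1 m2 t p x2 * m1^2 + cB m1 m2 t p x2 * m1 + cC m1 m2 t p x2 :=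
      rR4 hb hm1.le h
    exact absurd hG1 (not_le.mpr (Gm1_neg hm1 hm2 ht hp0 hp1 hx20 hx21 htp))

lemma BR_contOn (hm1 : 0 < m1) (hm2 : 0 < m2) (ht : 0 ≤ t) (hp0 : 0 ≤ p) (hp1 : p < 1) :
    ContinuousOn (fun y => BR m1 m2 t p y) (Set.Icc 0 m2) := by
  have hA : Continuous (fun y => cA m1 m2 t p y) := by unfold cA; fun_prop
  have hB : Continuous (fun y => cB m1 m2 t p y) := by unfold cB; fun_prop
  have hC : Continuous (fun y => cC m1 m2 t p y) := by unfold cC; fun_prop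
  have hs : Continuous (fun y => Real.sqrt ((cB m1 m2 t p y)^2 - 4*(cA m1 m2 t p y)*(cC m1 m2 t p y))) := by
    exact Real.continuous_sqrt.comp (by fun_prop)
  have hrho : ContinuousOn
      (fun y => rho (cA m1 m2 t p y) (cB m1 m2 t p y) (cC m1 m2 t p y)) (Set.Icc 0 m2) := by
    unfold rho
    apply ContinuousOn.div (by fun_prop) (by fun_prop)
    intro y hy
    exact ne_of_gt (rden (cB_neg hm1 hm2 ht hp0 hp1 hy.1 hy.2))
  have hclamp : Continuous (fun z : ℝ => min (max z 0) m1) :=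
    (continuous_id.max continuous_const).min continuous_const
  unfold BR
  exact hclamp.comp_continuousOn hrho

end br

/-! ### Packaging a Nash equilibrium -/

lemma build {m1 m2 t p x1 x2 : ℝ} (hm1 : 0 < m1) (hm2 : 0 < m2) (ht : 0 ≤ t)
    (hp0 : 0 ≤ p) (hp1 : p < 1)
    (hx10 : 0 ≤ x1) (hx11 : x1 ≤ m1) (hx20 : 0 ≤ x2) (hx21 : x2 ≤ m2)
    (hA1 : (1-p)*(m1+x2) < m1+m2+t) (hA2 : (1-p)*(m2+x1) < m2+m1+t)
    (hS1 : ∀ x, 0 ≤ x → x ≤ m1 →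
      ((1-p) * (cA m1 m2 t p x2 * x1^2 + cB m1 m2 t p x2 * x1 + cC m1 m2 t p x2)) * (x - x1) ≤ 0)
    (hS2 : ∀ x, 0 ≤ x → x ≤ m2 →
      ((1-p) * (cA m2 m1 t p x1 * x2^2 + cB m2 m1 t p x1 * x2 + cC m2 m1 t p x1)) * (x - x2) ≤ 0) :
    IsNash m1 m2 t p x1 x2 := by
  refine ⟨⟨hx10, hx11⟩, ⟨hx20, hx21⟩,
    dev1 hm1 hm2 ht hp0 hp1 hx10 hx11 hx20 hx21 hA1 hS1, ?_⟩
  intro x hx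
  rw [r2_swap, r2_swap]
  exact dev1 hm2 hm1 ht hp0 hp1 hx20 hx21 hx10 hx11 hA2 hS2 x hx

end MD


set_option maxHeartbeats 2000000 in
/-- Existence of a pure Nash equilibrium. -/
theorem stmt1 (m1 m2 t p : ℝ) (hm1 : 0 < m1) (hm2 : 0 < m2) (ht : 0 ≤ t)
    (hp0 : 0 ≤ p) (hp1 : p < 1) :
    ∃ x1 x2 : ℝ, IsNash m1 m2 t p x1 x2 := by
  by_cases htp : 0 < t ∨ 0 < p
  · -- main branch : fixed point of iterated best responses via IVT
    have hBR1c := MD.BR_contOn hm1 hm2 ht hp0 hp1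
    have hBR2c := MD.BR_contOn hm2 hm1 ht hp0 hp1
    have hmaps : Set.MapsTo (fun y => MD.BR m1 m2 t p y) (Set.Icc 0 m2) (Set.Icc 0 m1) :=
      fun y _ => ⟨MD.BR_nonneg hm1.le, MD.BR_le⟩
    have hFc : ContinuousOn (fun y => MD.BR m2 m1 t p (MD.BR m1 m2 t p y)) (Set.Icc 0 m2) :=
      hBR2c.comp hBR1c hmaps
    have hg : ContinuousOn (fun y => MD.BR m2 m1 t p (MD.BR m1 m2 t p y) - y) (Set.Icc 0 m2) :=
      hFc.sub continuousOn_id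
    have hFlt : ∀ y, MD.BR m2 m1 t p (MD.BR m1 m2 t p y) < m2 := fun y =>
      MD.BR_lt hm2 hm1 ht hp0 hp1 (MD.BR_nonneg hm1.le) MD.BR_le htp
    have h0mem : (0:ℝ) ∈ Set.Icc
        (MD.BR m2 m1 t p (MD.BR m1 m2 t p m2) - m2)
        (MD.BR m2 m1 t p (MD.BR m1 m2 t p 0) - 0) := by
      constructor
      · linarith [hFlt m2]
      · simpa using MD.BR_nonneg (m1 := m2) (m2 := m1) (t := t) (p := p)
          (x2 := MD.BR m1 m2 t p 0) hm2.le
    obtain ⟨x2s, hx2sI, hgeq⟩ := intermediate_value_Icc' hm2.le hg h0mem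
    have hfix : MD.BR m2 m1 t p (MD.BR m1 m2 t p x2s) = x2s := by
      have : MD.BR m2 m1 t p (MD.BR m1 m2 t p x2s) - x2s = 0 := hgeq
      linarith
    set x1s := MD.BR m1 m2 t p x2s with hx1sdef
    have hx1s0 : 0 ≤ x1s := MD.BR_nonneg hm1.le
    have hx1s1 : x1s ≤ m1 := MD.BR_le
    have hx2s0 : 0 ≤ x2s := hx2sI.1
    have hx2s1 : x2s ≤ m2 := hx2sI.2
    have hx2lt : x2s < m2 := by
      have := hFlt x2s; rw [← hx1sdef] at this; rw [← hfix]; exact this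
    have hS1 := MD.BR_KKT hm1 hm2 ht hp0 hp1 hx2s0 hx2s1
    rw [← hx1sdef] at hS1
    have hS2 := MD.BR_KKT hm2 hm1 ht hp0 hp1 hx1s0 hx1s1
    rw [hfix] at hS2
    have hA1 : (1-p)*(m1+x2s) < m1+m2+t := by
      nlinarith [mul_nonneg hp0 (add_nonneg hm1.le hx2s0)]
    have hA2 : (1-p)*(m2+x1s) < m2+m1+t := by
      rcases htp with h | h
      · nlinarith [mul_nonneg hp0 (add_nonneg hm2.le hx1s0)]
      · nlinarith [mul_pos h (add_pos_of_pos_of_nonneg hm2 hx1s0)]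
    exact ⟨x1s, x2s, MD.build hm1 hm2 ht hp0 hp1 hx1s0 hx1s1 hx2s0 hx2s1 hA1 hA2 hS1 hS2⟩
  · -- degenerate branch : t = 0 and p = 0
    push_neg at htp
    obtain ⟨ht', hp'⟩ := htp
    have ht0 : t = 0 := le_antisymm ht' ht
    have hp0' : p = 0 := le_antisymm hp' hp0
    subst ht0; subst hp0'
    have h01 : (0:ℝ) < 1 := one_pos
    rcases le_or_gt (4*m2) m1 with h4 | h4
    · -- x1 = m1/2, x2 = 0
      refine ⟨m1/2, 0, MD.build hm1 hm2 le_rfl le_rfl h01 (by positivity) (by linarith)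
        le_rfl hm2.le (by nlinarith) (by nlinarith) ?_ ?_⟩
      · intro x _ _
        have hz : ((1-(0:ℝ)) * (MD.cA m1 m2 0 0 0 * (m1/2)^2 + MD.cB m1 m2 0 0 0 * (m1/2)
            + MD.cC m1 m2 0 0 0)) = 0 := by
          unfold MD.cA MD.cB MD.cC; ring
        rw [hz, zero_mul]
      · intro x hx0 _
        apply mul_nonpos_of_nonpos_of_nonneg
        · unfold MD.cA MD.cB MD.cC
          nlinarith [mul_nonneg (mul_nonneg (mul_pos hm1 hm1).le
            (by linarith : (0:ℝ) ≤ m1 - 4*m2)) (by linarith : (0:ℝ) ≤ m1 + 2*m2)]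
        · linarith
    · rcases le_or_gt (4*m1) m2 with h4' | h4' 
      · -- x1 = 0, x2 = m2/2
        refine ⟨0, m2/2, MD.build hm1 hm2 le_rfl le_rfl h01 le_rfl hm1.le (by positivity)
          (by linarith) (by nlinarith) (by nlinarith) ?_ ?_⟩
        · intro x hx0 _
          apply mul_nonpos_of_nonpos_of_nonneg
          · unfold MD.cA MD.cB MD.cC
            nlinarith [mul_nonneg (mul_nonneg (mul_pos hm2 hm2).le
              (by linarith : (0:ℝ) ≤ m2 - 4*m1)) (by linarith : (0:ℝ) ≤ m2 + 2*m1)]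
          · linarith
        · intro x _ _
          have hz : ((1-(0:ℝ)) * (MD.cA m2 m1 0 0 0 * (m2/2)^2 + MD.cB m2 m1 0 0 0 * (m2/2)
              + MD.cC m2 m1 0 0 0)) = 0 := by
            unfold MD.cA MD.cB MD.cC; ring
          rw [hz, zero_mul]
      · -- interior equilibrium : x1 + x2 = sqrt (m1 * m2)
        have hmm : 0 < m1*m2 := mul_pos hm1 hm2
        set u := Real.sqrt (m1*m2) with hudef
        have hu2 : u^2 = m1*m2 := Real.sq_sqrt hmm.le
        have hu0 : 0 < u := Real.sqrt_pos.mpr hmm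
        have hult : u < 2*m2 := by
          rw [hudef]
          exact (Real.sqrt_lt' (by positivity)).mpr (by nlinarith)
        have hmlt : m1 < 2*u := by
          have : m1/2 < u := by
            rw [hudef]
            exact (Real.lt_sqrt (by positivity)).mpr (by nlinarith)
          linarith
        have h2u : m2 < 2*u := by
          have : m2/2 < u := by
            rw [hudef]
            exact (Real.lt_sqrt (by positivity)).mpr (by nlinarith)
          linarith
        have husum : u < m1 + m2 := by
          rw [hudef]
          exact (Real.sqrt_lt' (by positivity)).mpr (by nlinarith [sq_nonneg (m1-m2)])
        have hsq : 0 < (m1+m2-u)^2 := pow_pos (by linarith) 2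
        have hb : (2*m1*u - 4*m1*m2 : ℝ) < 0 := by nlinarith
        have hc : (0:ℝ) < 2*m1*m2*u - m1*m2^2 := by nlinarith
        have hGm1 : (m2-m1)*m1^2 + (2*m1*u-4*m1*m2)*m1 + (2*m1*m2*u - m1*m2^2) < 0 := by
          nlinarith [mul_pos hm1 hsq, hu2]
        have hGu : (m2-m1)*u^2 + (2*m1*u-4*m1*m2)*u + (2*m1*m2*u - m1*m2^2) < 0 := by
          nlinarith [hu2, mul_pos hmm (show (0:ℝ) < 2*u - m1 by linarith)]
        have hd := MD.rdisc_pos hb hc hGm1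
        set x1s := MD.rho (m2-m1) (2*m1*u-4*m1*m2) (2*m1*m2*u - m1*m2^2) with hx1sdef
        have hroot : (m2-m1)*x1s^2 + (2*m1*u-4*m1*m2)*x1s + (2*m1*m2*u - m1*m2^2) = 0 :=
          MD.rroot hb hd.le
        have hx1pos : 0 < x1s := div_pos (by linarith) (MD.rden hb)
        have hx1m1 : x1s < m1 := by
          by_contra h
          push_neg at h
          exact absurd (MD.rR4 hb hm1.le h) (not_le.mpr hGm1)
        have hx1u : x1s < u := by
          by_contra h
          push_neg at h
          exact absurd (MD.rR4 hb hu0.le h) (not_le.mpr hGu)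
        have hx2pos : 0 < u - x1s := by linarith
        have hx2m2 : u - x1s < m2 := by
          rcases le_or_gt u m2 with h | h
          · linarith
          · have hGM0 : 0 < (m2-m1)*(u-m2)^2 + (2*m1*u-4*m1*m2)*(u-m2)
                + (2*m1*m2*u - m1*m2^2) := by
              nlinarith [mul_pos hm2 hsq, hu2]
            have := MD.rR7 hb hc (by linarith : (0:ℝ) ≤ u - m2)
              (by linarith : u - m2 ≤ m1) hGM0 hGm1
            rw [← hx1sdef] at this
            linarith
        have hG1 : MD.cA m1 m2 0 0 (u-x1s) * x1s^2 + MD.cB m1 m2 0 0 (u-x1s) * x1s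
            + MD.cC m1 m2 0 0 (u-x1s) = 0 := by
          unfold MD.cA MD.cB MD.cC
          linear_combination m2 * hroot + (m2*(u - x1s - m2 - m1)) * hu2
        have hG2 : MD.cA m2 m1 0 0 x1s * (u-x1s)^2 + MD.cB m2 m1 0 0 x1s * (u-x1s)
            + MD.cC m2 m1 0 0 x1s = 0 := by
          unfold MD.cA MD.cB MD.cC
          linear_combination (-m1) * hroot + (m1*x1s) * hu2
        refine ⟨x1s, u - x1s, MD.build hm1 hm2 le_rfl le_rfl h01 hx1pos.le hx1m1.le
          hx2pos.le hx2m2.le (by nlinarith) (by nlinarith) ?_ ?_⟩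
        · intro x _ _
          have hz : ((1-(0:ℝ)) * (MD.cA m1 m2 0 0 (u-x1s) * x1s^2 + MD.cB m1 m2 0 0 (u-x1s) * x1s
              + MD.cC m1 m2 0 0 (u-x1s))) = 0 := by rw [hG1]; ring
          rw [hz, zero_mul]
        · intro x _ _
          have hz : ((1-(0:ℝ)) * (MD.cA m2 m1 0 0 x1s * (u-x1s)^2 + MD.cB m2 m1 0 0 x1s * (u-x1s)
              + MD.cC m2 m1 0 0 x1s)) = 0 := by rw [hG2]; ring
          rw [hz, zero_mul]
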